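/- Let f ∈ Hol(α) be a bounded α-Hölder potential. Then the family of ratios of iterates at the constant function 1 is uniformly bounded: sup{ L_f^n 1(x) / L_f^n 1(y) : n ∈ ℕ, x ∈ X, y ∈ X } < ∞. -/

import Mathlib

open MeasureTheory Filter Topology BoundedContinuousFunction

noncomputable section

variable {E : Type*} [MetricSpace E]

/-- The metric on the sequence space `X = E^ℕ`:
`d_X(x,y) = ∑_{n=1}^∞ 2⁻ⁿ · min(d_E(x_n,y_n), 1)`. -/
def dX (x y : ℕ → E) : ℝ :=
  ∑' n : ℕ, ((1 : ℝ) / 2) ^ (n + 1) * min (dist (x n) (y n)) 1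

/-- The left shift `σ(x₁,x₂,x₃,…) = (x₂,x₃,…)`. -/
def shift (x : ℕ → E) : ℕ → E := fun n => x (n + 1)

theorem continuous_shift : Continuous (shift (E := E)) :=
  continuous_pi fun n => continuous_apply (n + 1)

/-- Prepending one symbol: `ax = (a, x₁, x₂, …)`. -/
def cons (a : E) (x : ℕ → E) : ℕ → E := fun n => Nat.casesOn n a x

/-- Prepending a finite word `a = (a₁,…,a_n)`. -/
def prepend {n : ℕ} (a : Fin n → E) (x : ℕ → E) : ℕ → E :=
  fun k => if h : k < n then a ⟨k, h⟩ else x (k - n)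


section Helpers

lemma cons_zero' (a : E) (x : ℕ → E) : cons a x 0 = a := rfl
lemma cons_succ' (a : E) (x : ℕ → E) (n : ℕ) : cons a x (n + 1) = x n := rfl

lemma summable_half : Summable (fun n : ℕ => ((1 : ℝ) / 2) ^ (n + 1)) := by
  exact ((summable_geometric_of_lt_one (by norm_num : (0:ℝ) ≤ 1/2)
    (by norm_num)).mul_right (1/2)).congr fun n => (pow_succ _ n).symm

lemma summable_dX (x y : ℕ → E) :
    Summable (fun n : ℕ => ((1 : ℝ) / 2) ^ (n + 1) * min (dist (x n) (y n)) 1) :=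
  summable_half.of_nonneg_of_le
    (fun n => mul_nonneg (by positivity) (le_min dist_nonneg zero_le_one))
    (fun n => mul_le_of_le_one_right (by positivity) (min_le_right _ _))

lemma dX_nonneg (x y : ℕ → E) : 0 ≤ dX x y :=
  tsum_nonneg fun n => mul_nonneg (by positivity) (le_min dist_nonneg zero_le_one)

lemma dX_le_one (x y : ℕ → E) : dX x y ≤ 1 := by
  have h := Summable.tsum_le_tsum
    (fun n : ℕ => mul_le_of_le_one_right (by positivity : (0:ℝ) ≤ (1/2)^(n+1)) (min_le_right _ _))
    (summable_dX x y) summable_half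
  have h2 : ∑' n : ℕ, ((1:ℝ)/2) ^ n = 2 := by
    rw [tsum_geometric_of_lt_one (by norm_num) (by norm_num)]; norm_num
  have hS : ∑' n : ℕ, ((1:ℝ)/2) ^ (n+1) = 1 := by
    calc ∑' n : ℕ, ((1:ℝ)/2) ^ (n+1) = ∑' n : ℕ, ((1:ℝ)/2) ^ n * (1/2) :=
          tsum_congr fun n => pow_succ _ n
      _ = 2 * (1/2) := by rw [tsum_mul_right, h2]
      _ = 1 := by norm_num
  exact h.trans hS.le

lemma dX_cons (a : E) (x y : ℕ → E) : dX (cons a x) (cons a y) = dX x y / 2 := by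
  unfold dX
  rw [Summable.tsum_eq_zero_add (summable_dX (cons a x) (cons a y))]
  simp only [cons_succ', cons_zero', dist_self]
  have h0 : min (0:ℝ) 1 = 0 := min_eq_left zero_le_one
  have hc : ∀ n : ℕ, ((1:ℝ)/2) ^ (n+1+1) * min (dist (x n) (y n)) 1
      = (1/2) * (((1:ℝ)/2) ^ (n+1) * min (dist (x n) (y n)) 1) := fun n => by ring
  rw [tsum_congr hc, tsum_mul_left, h0]
  ring

lemma continuous_cons : Continuous (fun q : E × (ℕ → E) => cons q.1 q.2) := by
  apply continuous_pi
  intro n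
  cases n with
  | zero => exact continuous_fst
  | succ n => exact (continuous_apply n).comp continuous_snd

end Helpers

/-- Birkhoff sums `f_n = ∑_{k=0}^{n-1} f ∘ σᵏ`. -/
def birkhoff (f : (ℕ → E) → ℝ) (n : ℕ) (x : ℕ → E) : ℝ :=
  ∑ k ∈ Finset.range n, f (shift^[k] x)

/-- Boundedness of a real-valued function on `X`. -/
def Bdd (g : (ℕ → E) → ℝ) : Prop := ∃ M : ℝ, ∀ x, |g x| ≤ M

/-- `g` is `α`-Hölder with constant `C` (w.r.t. the metric `dX`). -/
def HolderConst (α C : ℝ) (g : (ℕ → E) → ℝ) : Prop :=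
  ∀ x y, |g x - g y| ≤ C * dX x y ^ α

/-- `g ∈ Hol(α)`: bounded, continuous and `α`-Hölder. -/
def MemHol (α : ℝ) (g : (ℕ → E) → ℝ) : Prop :=
  Continuous g ∧ Bdd g ∧ ∃ C : ℝ, HolderConst α C g

/-- `g ∈ C_b(X,ℝ)`: bounded and continuous. -/
def MemCb (g : (ℕ → E) → ℝ) : Prop := Continuous g ∧ Bdd g

/-- The Hölder seminorm `D_α(g) = sup_{x ≠ y} |g x - g y| / d_X(x,y)^α`. -/
def Dalpha (α : ℝ) (g : (ℕ → E) → ℝ) : ℝ :=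
  sSup {r : ℝ | ∃ x y : ℕ → E, x ≠ y ∧ r = |g x - g y| / dX x y ^ α}

/-- The supremum norm `‖g‖_∞`. -/
def supNorm (g : (ℕ → E) → ℝ) : ℝ := ⨆ x : ℕ → E, |g x|

/-- The Hölder norm `‖g‖_α = ‖g‖_∞ + D_α(g)`. -/
def alphaNorm (α : ℝ) (g : (ℕ → E) → ℝ) : ℝ := supNorm g + Dalpha α g

variable [MeasurableSpace E] [BorelSpace E]

/-- The Ruelle transfer operator `L_f φ(x) = ∫_E e^{f(ax)} φ(ax) dp(a)`. -/
def ruelle (p : Measure E) (f φ : (ℕ → E) → ℝ) : (ℕ → E) → ℝ :=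
  fun x => ∫ a, Real.exp (f (cons a x)) * φ (cons a x) ∂p

/-- The normalized operators `P^m_n(φ) = L_f^m(φ · L_f^n 1) / L_f^{m+n} 1`. -/
def Pmn (p : Measure E) (f : (ℕ → E) → ℝ) (m n : ℕ) (φ : (ℕ → E) → ℝ) : (ℕ → E) → ℝ :=
  fun x => (ruelle p f)^[m] (fun y => φ y * (ruelle p f)^[n] (fun _ => 1) y) x /
    (ruelle p f)^[m + n] (fun _ => 1) x

/-- The equivalent bounded metric `d̄(x,y) = min{1, 4 C_f d_X(x,y)^α}`. -/
def dbar (Cf α : ℝ) (x y : ℕ → E) : ℝ := min 1 (4 * Cf * dX x y ^ α)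

/-- The Wasserstein distance associated to `d̄`, via Kantorovich duality. -/
def wass (Cf α : ℝ) (μ₁ μ₂ : Measure (ℕ → E)) : ℝ :=
  sSup {r : ℝ | ∃ g : (ℕ → E) → ℝ,
    (∀ x y, |g x - g y| ≤ dbar Cf α x y) ∧ r = (∫ x, g x ∂μ₁) - ∫ x, g x ∂μ₂}

/-- Uniform boundedness of the ratios
`L_f^n 1(x) / L_f^n 1(y)` over all `n`, `x`, `y`. -/
theorem statement6 {E : Type*} [MetricSpace E] [CompleteSpace E]
    [TopologicalSpace.SeparableSpace E] [MeasurableSpace E] [BorelSpace E] [Nonempty E]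
    (p : Measure E) [IsProbabilityMeasure p]
    (α : ℝ) (hα0 : 0 < α) (hα1 : α < 1)
    (f : (ℕ → E) → ℝ) (hf : MemHol α f) :
    ∃ K : ℝ, ∀ (n : ℕ) (x y : ℕ → E),
      (ruelle p f)^[n] (fun _ => 1) x / (ruelle p f)^[n] (fun _ => 1) y ≤ K := by
  classical
  obtain ⟨hfc, ⟨M0, hM0⟩, C0, hC0⟩ := hf
  set M := max M0 0 with hMdef
  have hfM : ∀ z, |f z| ≤ M := fun z => (hM0 z).trans (le_max_left _ _)
  have hMnn : 0 ≤ M := le_max_right _ _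
  set C := max C0 0 with hCdef
  have hCnn : 0 ≤ C := le_max_right _ _
  have hfC : ∀ z w, |f z - f w| ≤ C * dX z w ^ α := fun z w =>
    (hC0 z w).trans (mul_le_mul_of_nonneg_right (le_max_left _ _)
      (Real.rpow_nonneg (dX_nonneg z w) α))
  set t := ((1:ℝ)/2) ^ α with htdef
  have ht0 : 0 < t := Real.rpow_pos_of_pos (by norm_num) α
  have ht1 : t < 1 := Real.rpow_lt_one (by norm_num) (by norm_num) hα0
  have h1t : (0:ℝ) < 1 - t := by linarith
  set C' := C * t / (1 - t) with hC'def
  have hC'0 : 0 ≤ C' := div_nonneg (mul_nonneg hCnn ht0.le) h1t.le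
  have hC'eq : C' * (1 - t) = C * t := by
    rw [hC'def, div_mul_cancel₀ _ h1t.ne']
  have hkey : (C + C') * t = C' := by linear_combination -hC'eq
  have main : ∀ n : ℕ, Measurable ((ruelle p f)^[n] fun _ => 1) ∧
      (∀ x, Real.exp (-(n:ℝ) * M) ≤ (ruelle p f)^[n] (fun _ => 1) x ∧
        (ruelle p f)^[n] (fun _ => 1) x ≤ Real.exp ((n:ℝ) * M)) ∧
      (∀ x y, (ruelle p f)^[n] (fun _ => 1) x ≤
        Real.exp (C' * dX x y ^ α) * (ruelle p f)^[n] (fun _ => 1) y) := by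
    intro n
    induction n with
    | zero =>
      refine ⟨measurable_const, fun x => by simp, fun x y => ?_⟩
      simp only [Function.iterate_zero, id_eq, mul_one]
      exact Real.one_le_exp (mul_nonneg hC'0 (Real.rpow_nonneg (dX_nonneg x y) α))
    | succ n ih =>
      obtain ⟨ihm, ihb, ihh⟩ := ih
      have hrec : ∀ x, (ruelle p f)^[n+1] (fun _ => 1) x
          = ∫ a, Real.exp (f (cons a x)) * (ruelle p f)^[n] (fun _ => 1) (cons a x) ∂p := by
        intro x
        rw [Function.iterate_succ_apply']
        rfl
      have hFm : Measurable (fun q : (ℕ → E) × E =>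
          Real.exp (f (cons q.2 q.1)) * (ruelle p f)^[n] (fun _ => 1) (cons q.2 q.1)) := by
        have hc : Measurable (fun q : (ℕ → E) × E => cons q.2 q.1) :=
          (continuous_cons.comp (continuous_snd.prodMk continuous_fst)).measurable
        exact ((Real.continuous_exp.comp hfc).measurable.comp hc).mul (ihm.comp hc)
      have hconsx : ∀ x : ℕ → E, Continuous fun a : E => cons a x := fun x =>
        continuous_cons.comp (continuous_id.prodMk continuous_const)
      have hmx : ∀ x, Measurable (fun a : E =>
          Real.exp (f (cons a x)) * (ruelle p f)^[n] (fun _ => 1) (cons a x)) :=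
        fun x => ((Real.continuous_exp.comp hfc).measurable.comp (hconsx x).measurable).mul
          (ihm.comp (hconsx x).measurable)
      have hgpos : ∀ z, 0 < (ruelle p f)^[n] (fun _ => 1) z :=
        fun z => lt_of_lt_of_le (Real.exp_pos _) (ihb z).1
      have hbd : ∀ x a, |Real.exp (f (cons a x)) * (ruelle p f)^[n] (fun _ => 1) (cons a x)|
          ≤ Real.exp M * Real.exp ((n:ℝ) * M) := by
        intro x a
        rw [abs_mul, abs_of_pos (Real.exp_pos _), abs_of_pos (hgpos (cons a x))]
        exact mul_le_mul (Real.exp_le_exp.mpr ((le_abs_self _).trans (hfM _)))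
          (ihb (cons a x)).2 (hgpos _).le (Real.exp_pos _).le
      have hint : ∀ x, Integrable (fun a : E =>
          Real.exp (f (cons a x)) * (ruelle p f)^[n] (fun _ => 1) (cons a x)) p :=
        fun x => (integrable_const (Real.exp M * Real.exp ((n:ℝ) * M))).mono'
          (hmx x).aestronglyMeasurable (ae_of_all _ (hbd x))
      refine ⟨?_, ?_, ?_⟩
      · have hsm := hFm.stronglyMeasurable.integral_prod_right' (ν := p)
        have heq : (fun x => ∫ a, Real.exp (f (cons a x)) *
            (ruelle p f)^[n] (fun _ => 1) (cons a x) ∂p) = (ruelle p f)^[n+1] fun _ => 1 := by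
          funext x; exact (hrec x).symm
        rw [← heq]
        exact hsm.measurable
      · intro x
        constructor
        · rw [hrec x]
          have hpt : ∀ a : E, Real.exp (-((n:ℝ)+1) * M)
              ≤ Real.exp (f (cons a x)) * (ruelle p f)^[n] (fun _ => 1) (cons a x) := by
            intro a
            have h1 : Real.exp (-M) ≤ Real.exp (f (cons a x)) :=
              Real.exp_le_exp.mpr (neg_le_of_abs_le (hfM _))
            calc Real.exp (-((n:ℝ)+1) * M) = Real.exp (-M) * Real.exp (-(n:ℝ) * M) := by
                  rw [← Real.exp_add]; ring_nf
              _ ≤ Real.exp (f (cons a x)) * (ruelle p f)^[n] (fun _ => 1) (cons a x) :=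
                  mul_le_mul h1 (ihb (cons a x)).1 (Real.exp_pos _).le (Real.exp_pos _).le
          have hle := integral_mono (integrable_const (Real.exp (-((n:ℝ)+1) * M)))
            (hint x) hpt
          rw [integral_const, probReal_univ, one_smul] at hle
          rw [show (-(((n:ℕ)+1 : ℕ) : ℝ) * M) = -((n:ℝ)+1) * M by push_cast; ring]
          exact hle
        · rw [hrec x]
          have hpt : ∀ a : E,
              Real.exp (f (cons a x)) * (ruelle p f)^[n] (fun _ => 1) (cons a x)
              ≤ Real.exp (((n:ℝ)+1) * M) := by
            intro a
            have h := hbd x a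
            rw [abs_mul, abs_of_pos (Real.exp_pos _), abs_of_pos (hgpos (cons a x))] at h
            calc Real.exp (f (cons a x)) * (ruelle p f)^[n] (fun _ => 1) (cons a x)
                ≤ Real.exp M * Real.exp ((n:ℝ) * M) := h
              _ = Real.exp (((n:ℝ)+1) * M) := by rw [← Real.exp_add]; ring_nf
          have hle := integral_mono (hint x)
            (integrable_const (Real.exp (((n:ℝ)+1) * M))) hpt
          rw [integral_const, probReal_univ, one_smul] at hle
          rw [show ((((n:ℕ)+1 : ℕ) : ℝ) * M) = ((n:ℝ)+1) * M by push_cast; ring]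
          exact hle
      · intro x y
        rw [hrec x, hrec y]
        have hdc : ∀ a : E, dX (cons a x) (cons a y) ^ α = dX x y ^ α * t := by
          intro a
          rw [dX_cons, div_eq_mul_inv,
            Real.mul_rpow (dX_nonneg x y) (by norm_num : (0:ℝ) ≤ 2⁻¹), htdef]
          norm_num
        have hpt : ∀ a : E,
            Real.exp (f (cons a x)) * (ruelle p f)^[n] (fun _ => 1) (cons a x)
            ≤ Real.exp (C' * dX x y ^ α) *
              (Real.exp (f (cons a y)) * (ruelle p f)^[n] (fun _ => 1) (cons a y)) := by
          intro a
          have h1 : Real.exp (f (cons a x))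
              ≤ Real.exp (C * dX (cons a x) (cons a y) ^ α) * Real.exp (f (cons a y)) := by
            rw [← Real.exp_add]
            refine Real.exp_le_exp.mpr ?_
            have h2 := (abs_le.mp (hfC (cons a x) (cons a y))).2
            linarith
          have h2 := ihh (cons a x) (cons a y)
          calc Real.exp (f (cons a x)) * (ruelle p f)^[n] (fun _ => 1) (cons a x)
              ≤ (Real.exp (C * dX (cons a x) (cons a y) ^ α) * Real.exp (f (cons a y))) *
                (Real.exp (C' * dX (cons a x) (cons a y) ^ α) *
                  (ruelle p f)^[n] (fun _ => 1) (cons a y)) :=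
                mul_le_mul h1 h2 (hgpos _).le (by positivity)
            _ = Real.exp (C' * dX x y ^ α) *
                (Real.exp (f (cons a y)) * (ruelle p f)^[n] (fun _ => 1) (cons a y)) := by
                rw [hdc a,
                  show C * (dX x y ^ α * t) = C' * dX x y ^ α + -(C' * (dX x y ^ α * t)) by
                    linear_combination dX x y ^ α * hkey,
                  Real.exp_add, Real.exp_neg]
                field_simp
        have hle := integral_mono (hint x)
          (((hint y).const_mul (Real.exp (C' * dX x y ^ α)))) hpt
        rwa [integral_const_mul] at hle
  refine ⟨Real.exp C', fun n x y => ?_⟩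
  obtain ⟨-, hb, hh⟩ := main n
  have hy0 : 0 < (ruelle p f)^[n] (fun _ => 1) y :=
    lt_of_lt_of_le (Real.exp_pos _) (hb y).1
  rw [div_le_iff₀ hy0]
  refine (hh x y).trans (mul_le_mul_of_nonneg_right ?_ hy0.le)
  refine Real.exp_le_exp.mpr ?_
  calc C' * dX x y ^ α ≤ C' * 1 :=
        mul_le_mul_of_nonneg_left (Real.rpow_le_one (dX_nonneg x y) (dX_le_one x y) hα0.le) hC'0
    _ = C' := mul_one _

end
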